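/- Let ℍ be the real quaternions with imaginary units i, j, k, let n ≥ 1, and let 𝔤 = sp(n+1) ⊕ ℝ, where sp(n+1) = {A ∈ ℍ^{(n+1)×(n+1)} : A + conj(A)ᵗ = 0} with the commutator bracket and the ℝ-summand is central, equipped with the invariant inner product ⟨(A,a),(B,b)⟩ = −Re(tr(A·B)) + a·b. Let 𝔥 = {(diag(C, a·i), a) : C ∈ sp(n), a ∈ ℝ}, let 𝔪 = 𝔥^⊥, pr_𝔪 the orthogonal projection onto 𝔪, and 𝔪₀ = {(diag(0_n, a·i), −a) : a ∈ ℝ} (which is the fixed-point set of ad(𝔥) on 𝔪). Then the set of Randers equigeodesic vectors contained in 𝔪 is exactly 𝔪₀ \ {0}. -/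

import Mathlib

open Matrix

attribute [local instance 100] LieRing.ofAssociativeRing

attribute [local instance 100] LieAlgebra.ofAssociativeAlgebra

/-- The quaternion imaginary unit `i`. -/
noncomputable def qi : Quaternion ℝ := ⟨0, 1, 0, 0⟩

/-- The ambient Lie algebra: quaternionic `(n+1)×(n+1)` matrices (with the commutator
bracket) times a central copy of `ℝ`.  The Lie algebra `𝔤 = sp(n+1) ⊕ ℝ` is the
subalgebra of pairs `(A, a)` with `A + conj(A)ᵗ = 0`. -/
abbrev SpU (n : ℕ) := Matrix (Fin (n + 1)) (Fin (n + 1)) (Quaternion ℝ) × ℝ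

/-- The invariant inner product `⟨(A,a),(B,b)⟩ = −Re(tr(A·B)) + a·b`. -/
noncomputable def ipSpU (n : ℕ) (x y : SpU n) : ℝ := -((x.1 * y.1).trace).re + x.2 * y.2

/-- An invariant inner product on the subspace `𝔪` of the Lie algebra `L`, encoded as a
bilinear form on `L` which is symmetric and positive definite on `𝔪`, and `ad 𝔥`-invariant
on `𝔪`. -/
def IsInvariantInnerOn {L : Type*} [LieRing L] [LieAlgebra ℝ L]
    (𝔥 𝔪 : Submodule ℝ L) (α : L →ₗ[ℝ] L →ₗ[ℝ] ℝ) : Prop :=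
  (∀ u ∈ 𝔪, ∀ v ∈ 𝔪, α u v = α v u) ∧
  (∀ u ∈ 𝔪, u ≠ 0 → 0 < α u u) ∧
  (∀ w ∈ 𝔥, ∀ u ∈ 𝔪, ∀ v ∈ 𝔪, α ⁅w, u⁆ v + α u ⁅w, v⁆ = 0)

/-- `X` is a Randers equigeodesic vector: the geodesic-vector criterion
`α(pr_𝔪 ⁅X,Z⁆, X) + √(α(X,X))·α(pr_𝔪 ⁅X,Z⁆, u) = 0` for every invariant inner product
`α` on `𝔪`, every `u ∈ 𝔪₀` with `α(u,u) < 1`, and every `Z ∈ 𝔪`. -/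
def IsRandersEquigeodesicVector {L : Type*} [LieRing L] [LieAlgebra ℝ L]
    (𝔥 𝔪 𝔪₀ : Submodule ℝ L) (pr : L →ₗ[ℝ] L) (X : L) : Prop :=
  ∀ α : L →ₗ[ℝ] L →ₗ[ℝ] ℝ, IsInvariantInnerOn 𝔥 𝔪 α →
    ∀ u ∈ 𝔪₀, α u u < 1 →
      ∀ Z ∈ 𝔪, α (pr ⁅X, Z⁆) X + Real.sqrt (α X X) * α (pr ⁅X, Z⁆) u = 0


section Aux
open Quaternion

@[simp] lemma rq_qi_re : qi.re = 0 := rfl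
@[simp] lemma rq_qi_imI : qi.imI = 1 := rfl
@[simp] lemma rq_qi_imJ : qi.imJ = 0 := rfl
@[simp] lemma rq_qi_imK : qi.imK = 0 := rfl

lemma rq_qi_mul_qi : qi * qi = -1 := by
  ext <;> simp [Quaternion.re_mul, Quaternion.imI_mul, Quaternion.imJ_mul, Quaternion.imK_mul]

lemma rq_star_qi : star qi = -qi := by
  ext <;> simp [Quaternion.re_star, Quaternion.imI_star, Quaternion.imJ_star, Quaternion.imK_star]

lemma rq_star_smul (r : ℝ) (a : Quaternion ℝ) : star (r • a) = r • star a := by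
  ext <;> simp

lemma rq_ipSpU_zero_right (n : ℕ) (x : SpU n) : ipSpU n x 0 = 0 := by
  simp [ipSpU]

lemma rq_qi_ne_zero : qi ≠ 0 := by
  intro h
  have := congrArg QuaternionAlgebra.imI h
  simp [qi] at this

lemma rq_re_mul_comm (x y : Quaternion ℝ) : (x * y).re = (y * x).re := by
  simp [Quaternion.re_mul]; ring

lemma rq_re_sum {ι : Type*} (s : Finset ι) (f : ι → Quaternion ℝ) :
    (∑ i ∈ s, f i).re = ∑ i ∈ s, (f i).re :=
  map_sum (QuaternionAlgebra.reₗ (-1 : ℝ) (0 : ℝ) (-1 : ℝ)) f s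

lemma rq_retr {m : ℕ} (A B : Matrix (Fin m) (Fin m) (Quaternion ℝ)) :
    ((A * B).trace).re = ∑ p, ∑ q, (A p q * B q p).re := by
  simp [Matrix.trace, Matrix.diag, Matrix.mul_apply, rq_re_sum]

lemma rq_retr_comm {m : ℕ} (A B : Matrix (Fin m) (Fin m) (Quaternion ℝ)) :
    ((A * B).trace).re = ((B * A).trace).re := by
  rw [rq_retr, rq_retr, Finset.sum_comm]
  exact Finset.sum_congr rfl fun p _ => Finset.sum_congr rfl fun q _ => rq_re_mul_comm _ _

lemma rq_lie_fst (n : ℕ) (z x : SpU n) : (⁅z, x⁆ : SpU n).1 = z.1 * x.1 - x.1 * z.1 := rfl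

lemma rq_lie_snd (n : ℕ) (z x : SpU n) : (⁅z, x⁆ : SpU n).2 = 0 := by
  show z.2 * x.2 - x.2 * z.2 = 0
  ring

lemma rq_ipSpU_symm (n : ℕ) (x y : SpU n) : ipSpU n x y = ipSpU n y x := by
  rw [ipSpU, ipSpU, rq_retr_comm, mul_comm]

lemma rq_ipSpU_inv (n : ℕ) (z x y : SpU n) : ipSpU n ⁅z, x⁆ y + ipSpU n x ⁅z, y⁆ = 0 := by
  have h := rq_retr_comm z.1 (x.1 * y.1)
  simp only [ipSpU, rq_lie_fst, rq_lie_snd, sub_mul, mul_sub, Matrix.trace_sub,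
    Quaternion.re_sub, zero_mul, mul_zero, mul_assoc] at *
  linarith

lemma rq_skew_entry {m : ℕ} (A : Matrix (Fin m) (Fin m) (Quaternion ℝ)) (h : A + Aᴴ = 0)
    (p q : Fin m) : A q p = -star (A p q) := by
  have h' := congrFun (congrFun h q) p
  simp only [Matrix.add_apply, Matrix.conjTranspose_apply, Matrix.zero_apply] at h'
  exact eq_neg_of_add_eq_zero_left h'

lemma rq_ipSpU_self (n : ℕ) (x : SpU n) (hx : x.1 + x.1ᴴ = 0) :
    ipSpU n x x = (∑ p, ∑ q, normSq (x.1 p q)) + x.2 * x.2 := by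
  have key : ∀ p q, (x.1 p q * x.1 q p).re = -(normSq (x.1 p q)) := by
    intro p q
    rw [rq_skew_entry x.1 hx p q, mul_neg, Quaternion.re_neg, Quaternion.normSq_def]
  rw [ipSpU, rq_retr]
  simp only [key, Finset.sum_neg_distrib, neg_neg]

lemma rq_ip_pos (n : ℕ) (x : SpU n) (hx : x.1 + x.1ᴴ = 0) (hne : x ≠ 0) :
    0 < ipSpU n x x := by
  rw [rq_ipSpU_self n x hx]
  have hs : (0:ℝ) ≤ ∑ p, ∑ q, normSq (x.1 p q) :=
    Finset.sum_nonneg fun p _ => Finset.sum_nonneg fun q _ => normSq_nonneg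
  rcases eq_or_ne x.2 0 with h2 | h2
  · have h1 : x.1 ≠ 0 := by
      intro h
      apply hne
      rw [Prod.ext_iff]
      exact ⟨h, h2⟩
    obtain ⟨p, q, hpq⟩ : ∃ p q, x.1 p q ≠ 0 := by
      by_contra h
      push_neg at h
      exact h1 (Matrix.ext fun p q => by simp [h p q])
    have hpos : 0 < ∑ p, ∑ q, normSq (x.1 p q) := by
      have hq : 0 < ∑ q', normSq (x.1 p q') :=
        Finset.sum_pos' (fun q' _ => normSq_nonneg)
          ⟨q, Finset.mem_univ q, lt_of_le_of_ne normSq_nonneg (Ne.symm (normSq_ne_zero.2 hpq))⟩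
      exact Finset.sum_pos' (fun p' _ => Finset.sum_nonneg fun q' _ => normSq_nonneg)
        ⟨p, Finset.mem_univ p, hq⟩
    nlinarith [mul_self_nonneg x.2]
  · nlinarith [mul_self_pos.2 h2]

lemma rq_std_conjT {m : ℕ} (i j : Fin m) (a : Quaternion ℝ) :
    (Matrix.single i j a)ᴴ = Matrix.single j i (star a) := by
  refine Matrix.ext fun x y => ?_
  by_cases h1 : x = j <;> by_cases h2 : y = i <;>
    simp [Matrix.conjTranspose_apply, h1, h2, Matrix.single_apply_of_ne, Ne.symm]

lemma rq_trace_mul_std {m : ℕ} (A : Matrix (Fin m) (Fin m) (Quaternion ℝ)) (i j : Fin m)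
    (c : Quaternion ℝ) : ((A * Matrix.single i j c).trace) = A j i * c := by
  rw [Matrix.trace, Finset.sum_eq_single j]
  · simp [Matrix.diag]
  · intro r _ hr
    simp [Matrix.diag, Matrix.mul_single_apply_of_ne c i j r r hr]
  · intro h; exact absurd (Finset.mem_univ _) h

lemma rq_std_neg {m : ℕ} (i j : Fin m) (a : Quaternion ℝ) :
    Matrix.single i j (-a) = -Matrix.single i j a := by
  refine Matrix.ext fun x y => ?_
  by_cases h1 : x = i
  · by_cases h2 : y = j
    · subst h1; subst h2; simp
    · have hne : ¬(i = x ∧ j = y) := fun hc => h2 hc.2.symm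
      simp [Matrix.single_apply_of_ne _ _ _ _ _ hne]
  · have hne : ¬(i = x ∧ j = y) := fun hc => h1 hc.1.symm
    simp [Matrix.single_apply_of_ne _ _ _ _ _ hne]


lemma rq_lie_skew {m : ℕ} (A B : Matrix (Fin m) (Fin m) (Quaternion ℝ))
    (hA : A + Aᴴ = 0) (hB : B + Bᴴ = 0) :
    (A * B - B * A) + (A * B - B * A)ᴴ = 0 := by
  have hA' : Aᴴ = -A := eq_neg_of_add_eq_zero_right hA
  have hB' : Bᴴ = -B := eq_neg_of_add_eq_zero_right hB
  simp only [Matrix.conjTranspose_sub, Matrix.conjTranspose_mul, hA', hB', Matrix.neg_mul,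
    Matrix.mul_neg, neg_neg, sub_neg_eq_add]
  abel

lemma rq_off_col {m : ℕ} (A B : Matrix (Fin (m+1)) (Fin (m+1)) (Quaternion ℝ)) (p : Fin (m+1))
    (hA : A p (Fin.last m) = 0) (hB : ∀ r, r ≠ Fin.last m → B r (Fin.last m) = 0) :
    (A * B) p (Fin.last m) = 0 := by
  rw [Matrix.mul_apply]
  refine Finset.sum_eq_zero fun r _ => ?_
  by_cases hr : r = Fin.last m
  · subst hr; rw [hA, zero_mul]
  · rw [hB r hr, mul_zero]

lemma rq_off_row {m : ℕ} (A B : Matrix (Fin (m+1)) (Fin (m+1)) (Quaternion ℝ)) (p : Fin (m+1))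
    (hB : B (Fin.last m) p = 0) (hA : ∀ r, r ≠ Fin.last m → A (Fin.last m) r = 0) :
    (A * B) (Fin.last m) p = 0 := by
  rw [Matrix.mul_apply]
  refine Finset.sum_eq_zero fun r _ => ?_
  by_cases hr : r = Fin.last m
  · subst hr; rw [hB, mul_zero]
  · rw [hA r hr, zero_mul]

lemma rq_corner_mul {m : ℕ} (A B : Matrix (Fin (m+1)) (Fin (m+1)) (Quaternion ℝ))
    (hA : ∀ r, r ≠ Fin.last m → A (Fin.last m) r = 0) :
    (A * B) (Fin.last m) (Fin.last m)
      = A (Fin.last m) (Fin.last m) * B (Fin.last m) (Fin.last m) := by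
  rw [Matrix.mul_apply, Finset.sum_eq_single (Fin.last m)]
  · intro r _ hr; rw [hA r hr, zero_mul]
  · intro h; exact absurd (Finset.mem_univ _) h

lemma rq_trace_std {m : ℕ} (i : Fin m) (c : Quaternion ℝ) :
    (Matrix.single i i c).trace = c := by
  rw [Matrix.trace_single_eq_same]

lemma rq_smul_qi_mul (a b : ℝ) : (a • qi) * (b • qi) = (a * b) • (qi * qi) := by
  rw [smul_mul_assoc, mul_smul_comm, smul_smul]

lemma rq_re_smul (a : ℝ) (x : Quaternion ℝ) : (a • x).re = a * x.re := by
  simp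

lemma rq_re_smul_qi_sq (a b : ℝ) : (((a : ℝ) • qi) * (b • qi)).re = -(a * b) := by
  rw [rq_smul_qi_mul, rq_qi_mul_qi, rq_re_smul]
  simp

noncomputable def ipB (n : ℕ) : SpU n →ₗ[ℝ] SpU n →ₗ[ℝ] ℝ :=
  LinearMap.mk₂ ℝ (ipSpU n)
    (fun x x' y => by
      simp only [ipSpU, Prod.fst_add, Prod.snd_add, Matrix.add_mul, Matrix.trace_add,
        Quaternion.re_add]
      ring)
    (fun c x y => by
      simp only [ipSpU, Prod.smul_fst, Prod.smul_snd, Matrix.smul_mul, Matrix.trace_smul,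
        rq_re_smul, smul_eq_mul]
      ring)
    (fun x y y' => by
      simp only [ipSpU, Prod.fst_add, Prod.snd_add, Matrix.mul_add, Matrix.trace_add,
        Quaternion.re_add]
      ring)
    (fun c x y => by
      simp only [ipSpU, Prod.smul_fst, Prod.smul_snd, Matrix.mul_smul, Matrix.trace_smul,
        rq_re_smul, smul_eq_mul]
      ring)

@[simp] lemma ipB_apply (n : ℕ) (x y : SpU n) : ipB n x y = ipSpU n x y := rfl

end Aux


/-- **Randers equigeodesic vectors for the sphere `S^{4n+3} = Sp(n+1)U(1)/Sp(n)U(1)`.**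
Here `𝔤 = sp(n+1) ⊕ ℝ` with the invariant inner product
`⟨(A,a),(B,b)⟩ = −Re(tr(A·B)) + a·b`,
`𝔥 = {(diag(C, a·i), a) : C ∈ sp(n), a ∈ ℝ}`, `𝔪 = 𝔥ᗮ` (inside `𝔤`) and
`𝔪₀ = {(diag(0_n, a·i), −a) : a ∈ ℝ}`.  The set of Randers equigeodesic vectors
contained in `𝔪` is exactly `𝔪₀ \ {0}`. -/
theorem randers_equigeodesic_vectors_of_sp_u_one_sphere
    (n : ℕ) (hn : 1 ≤ n)
    (𝔥 : Submodule ℝ (SpU n))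
    (h𝔥 : ∀ x : SpU n, x ∈ 𝔥 ↔
      (x.1 + x.1ᴴ = 0 ∧
        (∀ p : Fin (n + 1), p ≠ Fin.last n →
          x.1 p (Fin.last n) = 0 ∧ x.1 (Fin.last n) p = 0) ∧
        x.1 (Fin.last n) (Fin.last n) = x.2 • qi))
    (𝔪 : Submodule ℝ (SpU n))
    (h𝔪 : ∀ x : SpU n, x ∈ 𝔪 ↔ (x.1 + x.1ᴴ = 0 ∧ ∀ w ∈ 𝔥, ipSpU n x w = 0))
    (𝔪₀ : Submodule ℝ (SpU n))
    (h𝔪₀ : ∀ x : SpU n, x ∈ 𝔪₀ ↔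
      ((∀ p q : Fin (n + 1), ¬(p = Fin.last n ∧ q = Fin.last n) → x.1 p q = 0) ∧
        x.1 (Fin.last n) (Fin.last n) = (-x.2) • qi))
    (pr : SpU n →ₗ[ℝ] SpU n)
    (hpr : ∀ x : SpU n, x.1 + x.1ᴴ = 0 → pr x ∈ 𝔪 ∧ x - pr x ∈ 𝔥) :
    ∀ X : SpU n,
      (X ∈ 𝔪 ∧ X ≠ 0 ∧ IsRandersEquigeodesicVector 𝔥 𝔪 𝔪₀ pr X) ↔
        (X ∈ 𝔪₀ ∧ X ≠ 0) := by
  intro X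
  have hm_skew : ∀ x ∈ 𝔪, x.1 + x.1ᴴ = 0 := fun x hx => ((h𝔪 x).1 hx).1
  have hm_orth : ∀ x ∈ 𝔪, ∀ w ∈ 𝔥, ipSpU n x w = 0 := fun x hx => ((h𝔪 x).1 hx).2
  have hh_skew : ∀ w ∈ 𝔥, w.1 + w.1ᴴ = 0 := fun w hw => ((h𝔥 w).1 hw).1
  have hh_off : ∀ w ∈ 𝔥, ∀ p : Fin (n+1), p ≠ Fin.last n →
      w.1 p (Fin.last n) = 0 ∧ w.1 (Fin.last n) p = 0 := fun w hw => ((h𝔥 w).1 hw).2.1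
  have hh_cor : ∀ w ∈ 𝔥, w.1 (Fin.last n) (Fin.last n) = w.2 • qi :=
    fun w hw => ((h𝔥 w).1 hw).2.2
  -- 𝔥 is closed under the bracket
  have hHsub : ∀ w ∈ 𝔥, ∀ w' ∈ 𝔥, (⁅w, w'⁆ : SpU n) ∈ 𝔥 := by
    intro w hw w' hw'
    rw [h𝔥]
    refine ⟨?_, ?_, ?_⟩
    · rw [rq_lie_fst]
      exact rq_lie_skew _ _ (hh_skew w hw) (hh_skew w' hw')
    · intro p hp
      rw [rq_lie_fst]
      constructor
      · simp only [Matrix.sub_apply]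
        rw [rq_off_col _ _ _ (hh_off w hw p hp).1 (fun r hr => (hh_off w' hw' r hr).1),
          rq_off_col _ _ _ (hh_off w' hw' p hp).1 (fun r hr => (hh_off w hw r hr).1), sub_zero]
      · simp only [Matrix.sub_apply]
        rw [rq_off_row _ _ _ (hh_off w' hw' p hp).2 (fun r hr => (hh_off w hw r hr).2),
          rq_off_row _ _ _ (hh_off w hw p hp).2 (fun r hr => (hh_off w' hw' r hr).2), sub_zero]
    · rw [rq_lie_fst, rq_lie_snd]
      simp only [Matrix.sub_apply]
      rw [rq_corner_mul _ _ (fun r hr => (hh_off w hw r hr).2),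
        rq_corner_mul _ _ (fun r hr => (hh_off w' hw' r hr).2),
        hh_cor w hw, hh_cor w' hw', rq_smul_qi_mul, rq_smul_qi_mul, mul_comm w.2 w'.2,
        sub_self, zero_smul]
  -- 𝔥 ∩ 𝔪 = 0 and pr is the identity on 𝔪
  have hHM : ∀ y : SpU n, y ∈ 𝔥 → y ∈ 𝔪 → y = 0 := by
    intro y hyh hym
    by_contra hne
    have h0 := hm_orth y hym y hyh
    have h1 := rq_ip_pos n y (hm_skew y hym) hne
    rw [h0] at h1
    exact lt_irrefl 0 h1
  have hpr_id : ∀ x ∈ 𝔪, pr x = x := by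
    intro x hx
    have h1 := hpr x (hm_skew x hx)
    have h2 : x - pr x ∈ 𝔪 := Submodule.sub_mem 𝔪 hx h1.1
    exact (sub_eq_zero.mp (hHM _ h1.2 h2)).symm
  -- the first component of an element of 𝔪₀
  have hm0_fst : ∀ x ∈ 𝔪₀,
      x.1 = Matrix.single (Fin.last n) (Fin.last n) ((-x.2) • qi) := by
    intro x hx
    obtain ⟨hsh, hcor⟩ := (h𝔪₀ x).1 hx
    refine Matrix.ext fun p q => ?_
    by_cases hp : p = Fin.last n
    · by_cases hq : q = Fin.last n
      · subst hp; subst hq; rw [hcor]; simp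
      · rw [hsh p q (fun hc => hq hc.2),
          Matrix.single_apply_of_ne _ _ _ _ _ (fun hc => hq hc.2.symm)]
    · rw [hsh p q (fun hc => hp hc.1),
        Matrix.single_apply_of_ne _ _ _ _ _ (fun hc => hp hc.1.symm)]
  -- 𝔪₀ ⊆ 𝔪
  have hM0M : ∀ x ∈ 𝔪₀, x ∈ 𝔪 := by
    intro x hx
    have hfst := hm0_fst x hx
    rw [h𝔪]
    constructor
    · rw [hfst, rq_std_conjT]
      have hst : star ((-x.2) • qi) = -((-x.2) • qi) := by
        rw [rq_star_smul, rq_star_qi, smul_neg]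
      rw [hst, rq_std_neg]
      abel
    · intro w hw
      rw [rq_ipSpU_symm]
      simp only [ipSpU]
      rw [hfst, rq_trace_mul_std, hh_cor w hw, rq_re_smul_qi_sq]
      ring
  -- commuting of first components of elements of 𝔪₀
  have hcomm0 : ∀ x y : SpU n, x ∈ 𝔪₀ → y ∈ 𝔪₀ → x.1 * y.1 = y.1 * x.1 := by
    intro x y hx hy
    rw [hm0_fst x hx, hm0_fst y hy, Matrix.single_mul_single_same,
      Matrix.single_mul_single_same, rq_smul_qi_mul, rq_smul_qi_mul, mul_comm (-x.2) (-y.2)]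
  -- equality of brackets when first components agree
  have hlie_eq : ∀ x y z : SpU n, x.1 = y.1 → (⁅x, z⁆ : SpU n) = ⁅y, z⁆ := by
    intro x y z h
    refine Prod.ext ?_ ?_
    · rw [rq_lie_fst, rq_lie_fst, h]
    · rw [rq_lie_snd, rq_lie_snd]
  constructor
  · -- forward direction
    rintro ⟨hXm, hXne, hR⟩
    refine ⟨?_, hXne⟩
    have hα : IsInvariantInnerOn 𝔥 𝔪 (ipB n) := by
      refine ⟨fun u _ v _ => ?_, fun u hu hne => ?_, fun w _ u _ v _ => ?_⟩
      · simpa using rq_ipSpU_symm n u v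
      · simpa using rq_ip_pos n u (hm_skew u hu) hne
      · simpa using rq_ipSpU_inv n w u v
    have hXX : 0 < ipSpU n X X := rq_ip_pos n X (hm_skew X hXm) hXne
    have E0 : ∀ Z ∈ 𝔪, ipSpU n (pr ⁅X, Z⁆) X = 0 := by
      intro Z hZ
      have h := hR (ipB n) hα 0 (Submodule.zero_mem 𝔪₀) (by simp [rq_ipSpU_zero_right]) Z hZ
      simpa [rq_ipSpU_zero_right] using h
    set u₀ : SpU n := (Matrix.single (Fin.last n) (Fin.last n) qi, -1) with hu₀def
    have hu₀1 : u₀.1 = Matrix.single (Fin.last n) (Fin.last n) qi := rfl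
    have hu₀ : u₀ ∈ 𝔪₀ := by
      rw [h𝔪₀]
      constructor
      · intro p q hpq
        exact Matrix.single_apply_of_ne _ _ _ _ _ (fun hc => hpq ⟨hc.1.symm, hc.2.symm⟩)
      · simp [hu₀def]
    have hu₀u₀ : ipSpU n u₀ u₀ = 2 := by
      simp only [ipSpU, hu₀1]
      rw [rq_trace_mul_std]
      simp [rq_qi_mul_qi, hu₀def, Quaternion.re_one]
      norm_num
    have E2 : ∀ Z ∈ 𝔪, ipSpU n (pr ⁅X, Z⁆) u₀ = 0 := by
      intro Z hZ
      have hmem : (2⁻¹ : ℝ) • u₀ ∈ 𝔪₀ := Submodule.smul_mem _ _ hu₀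
      have hlt : ipB n ((2⁻¹:ℝ) • u₀) ((2⁻¹:ℝ) • u₀) < 1 := by
        simp only [LinearMap.map_smul, LinearMap.smul_apply, smul_eq_mul, ipB_apply, hu₀u₀]
        norm_num
      have h := hR (ipB n) hα _ hmem hlt Z hZ
      have h2 : Real.sqrt (ipSpU n X X) * (2⁻¹ * ipSpU n (pr ⁅X, Z⁆) u₀) = 0 := by
        have hE := E0 Z hZ
        rw [LinearMap.map_smul, smul_eq_mul] at h
        simp only [ipB_apply] at h
        rw [hE, zero_add] at h
        exact h
      have hs : Real.sqrt (ipSpU n X X) ≠ 0 := ne_of_gt (Real.sqrt_pos.mpr hXX)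
      rcases mul_eq_zero.mp h2 with h3 | h3
      · exact absurd h3 hs
      · linarith
    set W : SpU n := (Matrix.single (Fin.last n) (Fin.last n) qi, 1) with hWdef
    have hW1 : W.1 = Matrix.single (Fin.last n) (Fin.last n) qi := rfl
    have hWh : W ∈ 𝔥 := by
      rw [h𝔥]
      refine ⟨?_, ?_, ?_⟩
      · rw [hW1, rq_std_conjT, rq_star_qi, rq_std_neg]
        abel
      · intro p hp
        rw [hW1]
        exact ⟨Matrix.single_apply_of_ne _ _ _ _ _ (fun hc => hp hc.1.symm),
          Matrix.single_apply_of_ne _ _ _ _ _ (fun hc => hp hc.2.symm)⟩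
      · simp [hWdef]
    set Z : SpU n := ⁅W, X⁆ with hZdef
    have hZskew : Z.1 + Z.1ᴴ = 0 := by
      rw [hZdef, rq_lie_fst]
      exact rq_lie_skew _ _ (hh_skew W hWh) (hm_skew X hXm)
    have hZm : Z ∈ 𝔪 := by
      rw [h𝔪]
      refine ⟨hZskew, fun w hw => ?_⟩
      have h1 := rq_ipSpU_inv n W X w
      have h2 : ipSpU n X ⁅W, w⁆ = 0 := hm_orth X hXm ⁅W, w⁆ (hHsub W hWh w hw)
      rw [hZdef]
      linarith
    have hXZ_skew : (⁅X, Z⁆ : SpU n).1 + ((⁅X, Z⁆ : SpU n).1)ᴴ = 0 := by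
      rw [rq_lie_fst]
      exact rq_lie_skew _ _ (hm_skew X hXm) (hm_skew Z hZm)
    have hD := hpr ⁅X, Z⁆ hXZ_skew
    have step1 : ipSpU n ⁅X, Z⁆ u₀ = ipSpU n (pr ⁅X, Z⁆) u₀ := by
      have hb : ipSpU n (⁅X, Z⁆ - pr ⁅X, Z⁆) u₀ = 0 := by
        rw [rq_ipSpU_symm]
        exact hm_orth u₀ (hM0M u₀ hu₀) _ hD.2
      have hsub : ipSpU n ⁅X, Z⁆ u₀ - ipSpU n (pr ⁅X, Z⁆) u₀
          = ipSpU n (⁅X, Z⁆ - pr ⁅X, Z⁆) u₀ := by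
        show ipB n ⁅X, Z⁆ u₀ - ipB n (pr ⁅X, Z⁆) u₀ = ipB n (⁅X, Z⁆ - pr ⁅X, Z⁆) u₀
        rw [map_sub, LinearMap.sub_apply]
      linarith
    have step2 : ipSpU n ⁅X, Z⁆ u₀ = ipSpU n Z Z := by
      have hinv := rq_ipSpU_inv n X Z u₀
      have hXu : (⁅X, u₀⁆ : SpU n) = -Z := by
        refine Prod.ext ?_ ?_
        · rw [rq_lie_fst, Prod.fst_neg, hZdef, rq_lie_fst]
          have hWu : u₀.1 = W.1 := rfl
          rw [hWu, neg_sub]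
        · rw [rq_lie_snd, Prod.snd_neg, hZdef, rq_lie_snd, neg_zero]
      have hneg : ipSpU n Z (-Z) = -(ipSpU n Z Z) := by
        show ipB n Z (-Z) = -(ipB n Z Z)
        rw [map_neg]
      rw [hXu, hneg] at hinv
      linarith
    have hZZ : ipSpU n Z Z = 0 := by
      have hE := E2 Z hZm
      rw [← step1, step2] at hE
      exact hE
    have hZ0 : Z = 0 := by
      by_contra hne
      have := rq_ip_pos n Z hZskew hne
      rw [hZZ] at this
      exact lt_irrefl 0 this
    have hcomm : Matrix.single (Fin.last n) (Fin.last n) qi * X.1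
        = X.1 * Matrix.single (Fin.last n) (Fin.last n) qi := by
      have h1 : W.1 * X.1 - X.1 * W.1 = 0 := by
        rw [← rq_lie_fst n W X, ← hZdef, hZ0]
        rfl
      rw [← hW1]
      exact sub_eq_zero.mp h1
    have hrow : ∀ q, q ≠ Fin.last n → X.1 (Fin.last n) q = 0 := by
      intro q hq
      have h := congrFun (congrFun hcomm (Fin.last n)) q
      rw [Matrix.single_mul_apply_same,
        Matrix.mul_single_apply_of_ne _ _ _ _ _ hq] at h
      rcases mul_eq_zero.mp h with h' | h'
      · exact absurd h' rq_qi_ne_zero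
      · exact h'
    have hcol : ∀ p, p ≠ Fin.last n → X.1 p (Fin.last n) = 0 := by
      intro p hp
      have h := congrFun (congrFun hcomm p) (Fin.last n)
      rw [Matrix.single_mul_apply_of_ne _ _ _ _ _ hp,
        Matrix.mul_single_apply_same] at h
      rcases mul_eq_zero.mp h.symm with h' | h'
      · exact h'
      · exact absurd h' rq_qi_ne_zero
    have hblock : ∀ p q, p ≠ Fin.last n → q ≠ Fin.last n → X.1 p q = 0 := by
      intro p q hp hq
      set c := X.1 p q with hc
      set w : SpU n :=
        (Matrix.single q p (star c) - Matrix.single p q c, 0) with hwdef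
      have hw1 : w.1 = Matrix.single q p (star c) - Matrix.single p q c := rfl
      have hwh : w ∈ 𝔥 := by
        rw [h𝔥]
        refine ⟨?_, ?_, ?_⟩
        · rw [hw1, Matrix.conjTranspose_sub, rq_std_conjT, rq_std_conjT, star_star]
          abel
        · intro r hr
          rw [hw1]
          constructor
          · simp only [Matrix.sub_apply]
            rw [Matrix.single_apply_of_ne _ _ _ _ _ (fun hcc : q = r ∧ p = Fin.last n => hp hcc.2),
              Matrix.single_apply_of_ne _ _ _ _ _ (fun hcc : p = r ∧ q = Fin.last n => hq hcc.2),
              sub_zero]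
          · simp only [Matrix.sub_apply]
            rw [Matrix.single_apply_of_ne _ _ _ _ _ (fun hcc : q = Fin.last n ∧ p = r => hq hcc.1),
              Matrix.single_apply_of_ne _ _ _ _ _ (fun hcc : p = Fin.last n ∧ q = r => hp hcc.1),
              sub_zero]
        · rw [hw1]
          simp only [Matrix.sub_apply]
          rw [Matrix.single_apply_of_ne _ _ _ _ _ (fun hcc : q = Fin.last n ∧ p = Fin.last n => hq hcc.1),
            Matrix.single_apply_of_ne _ _ _ _ _ (fun hcc : p = Fin.last n ∧ q = Fin.last n => hp hcc.1),
            sub_zero, zero_smul]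
      have horth := hm_orth X hXm w hwh
      have hcompute : ipSpU n X w = -(2 * Quaternion.normSq c) := by
        simp only [ipSpU, hw1]
        rw [Matrix.mul_sub, Matrix.trace_sub, rq_trace_mul_std, rq_trace_mul_std]
        have hqp : X.1 q p = -star c := by
          rw [hc]
          exact rq_skew_entry X.1 (hm_skew X hXm) p q
        rw [← hc, hqp]
        have e1 : (c * star c).re = Quaternion.normSq c := (Quaternion.normSq_def c).symm
        have e2 : ((-star c) * c).re = -(Quaternion.normSq c) := by
          rw [neg_mul, Quaternion.re_neg, rq_re_mul_comm, e1]
        rw [Quaternion.re_sub, e1, e2]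
        ring
      rw [horth] at hcompute
      have : Quaternion.normSq c = 0 := by linarith
      rw [hc] at this ⊢
      exact Quaternion.normSq_eq_zero.mp this
    -- corner entry
    have hd := congrFun (congrFun hcomm (Fin.last n)) (Fin.last n)
    rw [Matrix.single_mul_apply_same, Matrix.mul_single_apply_same] at hd
    set d := X.1 (Fin.last n) (Fin.last n) with hddef
    have hdskew : d = -star d := by
      rw [hddef]
      exact rq_skew_entry X.1 (hm_skew X hXm) (Fin.last n) (Fin.last n)
    have hre : d.re = 0 := by
      have h := congrArg QuaternionAlgebra.re hdskew
      simp at h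
      linarith
    have hjk : d.imJ = 0 ∧ d.imK = 0 := by
      have h1 := congrArg QuaternionAlgebra.imJ hd
      have h2 := congrArg QuaternionAlgebra.imK hd
      simp [Quaternion.imJ_mul, Quaternion.imK_mul] at h1 h2
      constructor <;> linarith
    have ht := hm_orth X hXm W hWh
    have htr : (X.1 * W.1).trace = d * qi := by
      rw [hW1, rq_trace_mul_std, hddef]
    have hdre : (d * qi).re = -d.imI := by
      simp [Quaternion.re_mul]
    have himI : d.imI = -X.2 := by
      have hW2 : W.2 = 1 := rfl
      simp only [ipSpU, htr, hdre, hW2, mul_one] at ht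
      linarith
    rw [h𝔪₀]
    constructor
    · intro p q hpq
      by_cases hp : p = Fin.last n
      · subst hp
        exact hrow q (fun h => hpq ⟨rfl, h⟩)
      · by_cases hq : q = Fin.last n
        · subst hq
          exact hcol p hp
        · exact hblock p q hp hq
    · rw [← hddef]
      ext <;> simp [hre, hjk.1, hjk.2, himI]
  · -- backward direction
    rintro ⟨hX0, hXne⟩
    have hXm := hM0M X hX0
    refine ⟨hXm, hXne, ?_⟩
    intro α hα u hu hu1 Z hZ
    obtain ⟨hsymm, hpos, hinv⟩ := hα
    set wx : SpU n := (X.1, -X.2) with hwxdef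
    have hwx1 : wx.1 = X.1 := rfl
    have hwxh : wx ∈ 𝔥 := by
      rw [h𝔥]
      obtain ⟨hsh, hcor⟩ := (h𝔪₀ X).1 hX0
      refine ⟨hm_skew X hXm, fun p hp => ⟨hsh p (Fin.last n) (fun hc => hp hc.1),
        hsh (Fin.last n) p (fun hc => hp hc.2)⟩, ?_⟩
      exact hcor
    have hbr : (⁅X, Z⁆ : SpU n) = ⁅wx, Z⁆ := hlie_eq X wx Z rfl
    have hXZskew : (⁅X, Z⁆ : SpU n).1 + ((⁅X, Z⁆ : SpU n).1)ᴴ = 0 := by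
      rw [rq_lie_fst]
      exact rq_lie_skew _ _ (hm_skew X hXm) (hm_skew Z hZ)
    have hXZm : (⁅X, Z⁆ : SpU n) ∈ 𝔪 := by
      rw [h𝔪]
      refine ⟨hXZskew, fun w hw => ?_⟩
      have h1 := rq_ipSpU_inv n wx Z w
      have h2 : ipSpU n Z ⁅wx, w⁆ = 0 := hm_orth Z hZ ⁅wx, w⁆ (hHsub wx hwxh w hw)
      rw [hbr]
      linarith
    have hprXZ : pr ⁅X, Z⁆ = ⁅X, Z⁆ := hpr_id _ hXZm
    have hwxX : (⁅wx, X⁆ : SpU n) = 0 := by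
      refine Prod.ext ?_ ?_
      · rw [rq_lie_fst, hwx1, sub_self, Prod.fst_zero]
      · rw [rq_lie_snd, Prod.snd_zero]
    have hwxu : (⁅wx, u⁆ : SpU n) = 0 := by
      refine Prod.ext ?_ ?_
      · rw [rq_lie_fst, hwx1, hcomm0 X u hX0 hu, sub_self, Prod.fst_zero]
      · rw [rq_lie_snd, Prod.snd_zero]
    have e1 : α (pr ⁅X, Z⁆) X = 0 := by
      have h := hinv wx hwxh Z hZ X hXm
      rw [hwxX] at h
      simp only [map_zero] at h
      rw [hprXZ, hbr]
      linarith
    have e2 : α (pr ⁅X, Z⁆) u = 0 := by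
      have h := hinv wx hwxh Z hZ u (hM0M u hu)
      rw [hwxu] at h
      simp only [map_zero] at h
      rw [hprXZ, hbr]
      linarith
    rw [e1, e2, mul_zero, add_zero]
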